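/- With F a finite field, F² the quadratic extension by a root α of X² − p(X+1) (p ∈ F* making it irreducible), γ = 1 − p⁻¹α, τ = p⁻¹α: the map σ̃: F² → F² defined by σ̃(a·γ + b·τ) = b·γ + a·τ (for a, b ∈ F) is a field automorphism of F², and it is an involution, hence a sesqui-morphism. -/

import Mathlib

/-- The map `σ̃ (aγ + bτ) = bγ + aτ` is a field automorphism of the quadratic
extension `K`, is an involution, and hence a sesqui-morphism. -/
theorem sigma_tilde_automorphism {F K : Type*} [Field F] [Fintype F] [Field K] [Algebra F K]
    (hdim : Module.finrank F K = 2)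
    (p : F) (hp : p ≠ 0) (hroot : ∀ x : F, x ^ 2 - p * (x + 1) ≠ 0)
    (α : K) (hα : α ^ 2 = algebraMap F K p * (α + 1))
    (γ τ : K)
    (hγ : γ = 1 - (algebraMap F K p)⁻¹ * α)
    (hτ : τ = (algebraMap F K p)⁻¹ * α) :
    ∃ e : K ≃+* K,
      (∀ a b : F, e (algebraMap F K a * γ + algebraMap F K b * τ)
          = algebraMap F K b * γ + algebraMap F K a * τ) ∧
      (∀ x : K, e (e x) = x) ∧
      (∃ e' : K ≃+* K, ∀ x : K, e' x = e x / e 1) := by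
  classical
  -- basic setup
  have hfd : FiniteDimensional F K := FiniteDimensional.of_finrank_eq_succ hdim
  have hfinK : Finite K := Module.finite_of_finite F
  haveI : Fintype K := Fintype.ofFinite K
  set q := Fintype.card F with hq
  -- characteristic
  set r := ringChar F with hr
  haveI : Fact r.Prime := ⟨CharP.char_is_prime F r⟩
  haveI : CharP K r := charP_of_injective_algebraMap (algebraMap F K).injective r
  obtain ⟨n, -, hcard⟩ := FiniteField.card F r
  -- the q-power Frobenius ring hom
  let f : K →+* K := iterateFrobenius K r n
  have hf : ∀ x : K, f x = x ^ q := fun x => by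
    rw [hq, hcard]; exact iterateFrobenius_def (R := K) r n x
  have hbij : Function.Bijective f :=
    Finite.injective_iff_bijective.mp f.injective
  let e : K ≃+* K := RingEquiv.ofBijective f hbij
  have he : ∀ x : K, e x = x ^ q := hf
  -- e fixes F
  have halg : ∀ a : F, e (algebraMap F K a) = algebraMap F K a := fun a => by
    rw [he, ← map_pow, FiniteField.pow_card]
  -- fixed points of e are in the image of F
  have hfix : ∀ x : K, x ^ q = x → ∃ a : F, algebraMap F K a = x := by
    intro x hx
    have hone : 1 < q := Fintype.one_lt_card
    have hpoly : (Polynomial.X ^ q - Polynomial.X : Polynomial K) ≠ 0 :=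
      FiniteField.X_pow_card_sub_X_ne_zero K hone
    have hdeg : (Polynomial.X ^ q - Polynomial.X : Polynomial K).natDegree = q :=
      FiniteField.X_pow_card_sub_X_natDegree_eq K hone
    set S := (Polynomial.X ^ q - Polynomial.X : Polynomial K).roots.toFinset with hS
    have hcardS : S.card ≤ q := by
      have h1 : S.card ≤ Multiset.card (Polynomial.X ^ q - Polynomial.X :
          Polynomial K).roots := Multiset.toFinset_card_le _
      have h2 := Polynomial.card_roots' (Polynomial.X ^ q - Polynomial.X : Polynomial K)
      rw [hdeg] at h2
      exact h1.trans h2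
    set T := Finset.univ.image (algebraMap F K) with hT
    have hTS : T ⊆ S := by
      intro y hy
      simp only [hT, Finset.mem_image] at hy
      obtain ⟨a, -, rfl⟩ := hy
      simp only [hS, Multiset.mem_toFinset, Polynomial.mem_roots hpoly]
      have haq : a ^ q = a := by rw [hq]; exact FiniteField.pow_card a
      simp only [Polynomial.IsRoot, Polynomial.eval_sub, Polynomial.eval_pow,
        Polynomial.eval_X, ← map_pow, haq, sub_self]
    have hcardT : T.card = q := by
      rw [hT, Finset.card_image_of_injective _ (algebraMap F K).injective,
        Finset.card_univ]
    have hST : T = S := Finset.eq_of_subset_of_card_le hTS (hcardT ▸ hcardS)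
    have hxS : x ∈ S := by
      simp only [hS, Multiset.mem_toFinset, Polynomial.mem_roots hpoly]
      simp [Polynomial.IsRoot, hx]
    rw [← hST, hT, Finset.mem_image] at hxS
    obtain ⟨a, -, ha⟩ := hxS
    exact ⟨a, ha⟩
  -- α is not fixed by e
  have hαnotfix : α ^ q ≠ α := by
    intro hax
    obtain ⟨a, ha⟩ := hfix α hax
    apply hroot a
    apply (algebraMap F K).injective
    rw [map_sub, map_pow, map_mul, map_add, map_one, ha, map_zero, hα, sub_self]
  -- compute e α
  set p' : K := algebraMap F K p with hp'
  have hp'0 : p' ≠ 0 := by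
    simp [hp', map_eq_zero, hp]
  have heα : e α = p' - α := by
    have hβ : (e α) ^ 2 = p' * (e α + 1) := by
      rw [← map_pow, hα, map_mul, map_add, map_one, hp', halg]
    have key : (e α - α) * (e α + α - p') = 0 := by
      have : (e α - α) * (e α + α - p') =
          ((e α) ^ 2 - p' * (e α + 1)) - (α ^ 2 - p' * (α + 1)) := by ring
      rw [this, hβ, hα, sub_self, sub_self, sub_zero]
    rcases mul_eq_zero.mp key with h | h
    · exfalso; apply hαnotfix; rw [← he]; linear_combination h
    · linear_combination h
  -- e swaps γ and τ
  have hinv : (algebraMap F K p)⁻¹ = algebraMap F K p⁻¹ := by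
    rw [map_inv₀]
  have heτ : e τ = γ := by
    rw [hτ, hγ, hinv, map_mul, halg, heα, ← hinv, hp']
    field_simp
    rw [sub_div, div_self ((map_ne_zero (algebraMap F K)).mpr hp)]
  have heγ : e γ = τ := by
    rw [hγ, hτ, map_sub, map_one, hinv, map_mul, halg, heα, ← hinv, hp']
    field_simp
    rw [sub_div, div_self ((map_ne_zero (algebraMap F K)).mpr hp)]; ring
  refine ⟨e, ?_, ?_, ?_⟩
  · intro a b
    rw [map_add, map_mul, map_mul, halg, halg, heγ, heτ]
    ring
  · intro x
    have hK : Fintype.card K = q * q := by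
      rw [Module.card_eq_pow_finrank (K := F) (V := K), hdim]; ring
    rw [he, he, ← pow_mul, ← hK]
    exact FiniteField.pow_card x
  · exact ⟨e, fun x => by rw [map_one, div_one]⟩
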